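/- Let k be a field of characteristic not equal to 2 and A a finite-dimensional unital associative k-algebra equipped with a nondegenerate symmetric invariant bilinear form B (B(x·y,z) = B(x,y·z), B(x,y) = B(y,x)); let φ : A → A* be the linear isomorphism with φ(x)(y) = B(x,y). Let r ∈ A⊗A be skew-symmetric, i.e. σ(r) = −r. Then r12·r13 + r13·r23 − r23·r12 = 0 in A⊗A⊗A if and only if the linear map r̂ = F_r∘φ : A → A is a Rota-Baxter operator of weight zero, i.e. r̂(x)·r̂(y) = r̂(r̂(x)·y) + r̂(x·r̂(y)) for all x, y ∈ A. -/

import Mathlib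

open TensorProduct

/-- `r ↦ r₁₂ = Σ aᵢ ⊗ bᵢ ⊗ 1` in `A ⊗ (A ⊗ A)`. -/
noncomputable def e12 (k A : Type) [Field k] [Ring A] [Algebra k A] :
    A ⊗[k] A →ₗ[k] A ⊗[k] (A ⊗[k] A) :=
  TensorProduct.map LinearMap.id ((TensorProduct.mk k A A).flip 1)

/-- `r ↦ r₁₃ = Σ aᵢ ⊗ 1 ⊗ bᵢ` in `A ⊗ (A ⊗ A)`. -/
noncomputable def e13 (k A : Type) [Field k] [Ring A] [Algebra k A] :
    A ⊗[k] A →ₗ[k] A ⊗[k] (A ⊗[k] A) :=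
  TensorProduct.map LinearMap.id (TensorProduct.mk k A A 1)

/-- `r ↦ r₂₃ = Σ 1 ⊗ aᵢ ⊗ bᵢ` in `A ⊗ (A ⊗ A)`. -/
noncomputable def e23 (k A : Type) [Field k] [Ring A] [Algebra k A] :
    A ⊗[k] A →ₗ[k] A ⊗[k] (A ⊗[k] A) :=
  TensorProduct.mk k A (A ⊗[k] A) 1

/-- For `r ∈ A ⊗ A`, the induced map `F_r : A* → A`, characterized by
`b*(F_r(a*)) = (a* ⊗ b*)(r)`. -/
noncomputable def Fr {k A : Type} [Field k] [AddCommGroup A] [Module k A]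
    (r : A ⊗[k] A) (f : Module.Dual k A) : A :=
  TensorProduct.lid k A (LinearMap.rTensor A f r)

section Aux

variable {k A : Type} [Field k] [Ring A] [Algebra k A]

/-- Contraction of first tensor factor with a functional. -/
noncomputable def ctr (f : Module.Dual k A) : A ⊗[k] A →ₗ[k] A :=
  (TensorProduct.lid k A).toLinearMap ∘ₗ LinearMap.rTensor A f

@[simp] lemma ctr_tmul (f : Module.Dual k A) (a b : A) : ctr f (a ⊗ₜ[k] b) = f a • b := by
  simp [ctr]

/-- Contraction of the first two factors of `A ⊗ (A ⊗ A)` with functionals. -/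
noncomputable def Psi (f g : Module.Dual k A) : A ⊗[k] (A ⊗[k] A) →ₗ[k] A :=
  ctr f ∘ₗ LinearMap.lTensor A (ctr g)

@[simp] lemma Psi_tmul (f g : Module.Dual k A) (a : A) (u : A ⊗[k] A) :
    Psi f g (a ⊗ₜ[k] u) = f a • ctr g u := by
  simp [Psi]

lemma Fr_eq (r : A ⊗[k] A) (f : Module.Dual k A) : Fr r f = ctr f r := rfl

@[simp] lemma Fr_tmul (a b : A) (f : Module.Dual k A) : Fr (a ⊗ₜ[k] b) f = f a • b := by
  simp [Fr]

@[simp] lemma Fr_zero (f : Module.Dual k A) : Fr (0 : A ⊗[k] A) f = 0 := by simp [Fr]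

@[simp] lemma Fr_add (r s : A ⊗[k] A) (f : Module.Dual k A) :
    Fr (r + s) f = Fr r f + Fr s f := by simp [Fr]

@[simp] lemma Fr_neg (r : A ⊗[k] A) (f : Module.Dual k A) : Fr (-r) f = -Fr r f := by
  simp [Fr]

@[simp] lemma Fr_dual_zero (r : A ⊗[k] A) : Fr r (0 : Module.Dual k A) = 0 := by
  simp [Fr, LinearMap.rTensor_zero]

@[simp] lemma Fr_dual_add (r : A ⊗[k] A) (f g : Module.Dual k A) :
    Fr r (f + g) = Fr r f + Fr r g := by
  simp [Fr, LinearMap.rTensor_add]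

@[simp] lemma Fr_dual_neg (r : A ⊗[k] A) (f : Module.Dual k A) :
    Fr r (-f) = -Fr r f := by
  simp [Fr, LinearMap.rTensor_neg]

@[simp] lemma e12_tmul (a b : A) : e12 k A (a ⊗ₜ[k] b) = a ⊗ₜ[k] (b ⊗ₜ[k] (1 : A)) := by
  simp [e12]

@[simp] lemma e13_tmul (a b : A) : e13 k A (a ⊗ₜ[k] b) = a ⊗ₜ[k] ((1 : A) ⊗ₜ[k] b) := by
  simp [e13]

@[simp] lemma e23_tmul (a b : A) : e23 k A (a ⊗ₜ[k] b) = (1 : A) ⊗ₜ[k] (a ⊗ₜ[k] b) := by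
  simp [e23]

variable (B : A →ₗ[k] A →ₗ[k] k)

lemma psi_e12_e13 (hBinv : ∀ x y z : A, B (x * y) z = B x (y * z))
    (r s : A ⊗[k] A) (x y : A) :
    Psi (B x) (B y) (e12 k A r * e13 k A s) =
      Fr s (B (x * Fr (TensorProduct.comm k A A r) (B y))) := by
  induction r using TensorProduct.induction_on with
  | zero => simp
  | tmul a b =>
    induction s using TensorProduct.induction_on with
    | zero => simp
    | tmul c d =>
      simp only [e12_tmul, e13_tmul, Algebra.TensorProduct.tmul_mul_tmul, mul_one, one_mul,
        TensorProduct.comm_tmul, Fr_tmul, Psi_tmul, ctr_tmul, mul_smul_comm, map_smul,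
        LinearMap.smul_apply, smul_smul, smul_eq_mul]
      rw [← hBinv x a c]
      ring_nf
    | add s1 s2 h1 h2 =>
      simp only [map_add, mul_add, h1, h2, Fr_add]
  | add r1 r2 h1 h2 =>
    simp only [map_add, add_mul, h1, h2, mul_add, Fr_add, Fr_dual_add]

lemma psi_e13_e23 (r s : A ⊗[k] A) (x y : A) :
    Psi (B x) (B y) (e13 k A r * e23 k A s) = Fr r (B x) * Fr s (B y) := by
  induction r using TensorProduct.induction_on with
  | zero => simp
  | tmul a b =>
    induction s using TensorProduct.induction_on with
    | zero => simp
    | tmul c d =>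
      simp only [e13_tmul, e23_tmul, Algebra.TensorProduct.tmul_mul_tmul, mul_one, one_mul,
        Psi_tmul, ctr_tmul, Fr_tmul, smul_mul_smul_comm]
      simp [smul_smul]
    | add s1 s2 h1 h2 => simp only [map_add, mul_add, h1, h2, Fr_add]
  | add r1 r2 h1 h2 => simp only [map_add, add_mul, h1, h2, Fr_add, add_mul]

lemma psi_e23_e12 (hBsymm : ∀ x y : A, B x y = B y x)
    (hBinv : ∀ x y z : A, B (x * y) z = B x (y * z))
    (r s : A ⊗[k] A) (x y : A) :
    Psi (B x) (B y) (e23 k A r * e12 k A s) = Fr r (B (Fr s (B x) * y)) := by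
  induction r using TensorProduct.induction_on with
  | zero => simp
  | tmul a b =>
    induction s using TensorProduct.induction_on with
    | zero => simp
    | tmul c d =>
      simp only [e23_tmul, e12_tmul, Algebra.TensorProduct.tmul_mul_tmul, mul_one, one_mul,
        Psi_tmul, ctr_tmul, Fr_tmul, smul_mul_assoc, map_smul, LinearMap.smul_apply,
        smul_smul, smul_eq_mul]
      have : B y (a * d) = B (d * y) a := by
        rw [hBsymm (d * y) a, ← hBinv a d y, hBsymm y (a * d)]
      rw [this]
    | add s1 s2 h1 h2 =>
      simp only [map_add, mul_add, h1, h2, add_mul, Fr_add, Fr_dual_add]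
  | add r1 r2 h1 h2 => simp only [map_add, add_mul, h1, h2, Fr_add]

lemma psi_inj [FiniteDimensional k A]
    (hBnd : ∀ x : A, (∀ y : A, B x y = 0) → x = 0)
    (u : A ⊗[k] (A ⊗[k] A)) (h : ∀ x y : A, Psi (B x) (B y) u = 0) : u = 0 := by
  have hinj : Function.Injective B := by
    rw [← LinearMap.ker_eq_bot, LinearMap.ker_eq_bot']
    intro x hx
    exact hBnd x fun y => by rw [hx]; rfl
  have hsurj : Function.Surjective B :=
    (LinearMap.injective_iff_surjective_of_finrank_eq_finrank
      (Subspace.dual_finrank_eq).symm).mp hinj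
  have hall : ∀ f g : Module.Dual k A, Psi f g u = 0 := by
    intro f g
    obtain ⟨x, hx⟩ := hsurj f
    obtain ⟨y, hy⟩ := hsurj g
    rw [← hx, ← hy]; exact h x y
  let b := Module.finBasis k A
  let bb := b.tensorProduct (b.tensorProduct b)
  have key : ∀ (v : A ⊗[k] (A ⊗[k] A)) (i j l),
      bb.repr v (i, (j, l)) = b.repr (Psi (b.coord i) (b.coord j) v) l := by
    intro v
    induction v using TensorProduct.induction_on with
    | zero => simp
    | tmul a w =>
      induction w using TensorProduct.induction_on with
      | zero => simp
      | tmul p q =>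
        intro i j l
        simp only [bb, Module.Basis.tensorProduct_repr_tmul_apply, Module.Basis.coord_apply, Psi_tmul,
          ctr_tmul, map_smul, Finsupp.smul_apply, smul_eq_mul]
        ring
      | add w1 w2 h1 h2 =>
        intro i j l
        simp only [tmul_add, map_add, Finsupp.add_apply, h1, h2]
    | add v1 v2 h1 h2 =>
      intro i j l
      simp only [map_add, Finsupp.add_apply, h1, h2]
  have : bb.repr u = 0 := by
    ext ⟨i, j, l⟩
    rw [key u i j l]
    rw [hall (b.coord i) (b.coord j)]; simp
  exact (LinearEquiv.map_eq_zero_iff bb.repr).mp this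

end Aux
/-- Corollary 3.13(ii), skew case: on a finite-dimensional algebra with
a nondegenerate symmetric invariant bilinear form `B` (with `φ(x) = B(x,·)`), a
skew-symmetric `r ∈ A ⊗ A` is a solution of the AYBE iff `r̂ = F_r ∘ φ : A → A` is a
Rota–Baxter operator of weight zero. -/
theorem stmt15 {k A : Type} [Field k] (hchar : (2 : k) ≠ 0)
    [Ring A] [Algebra k A] [FiniteDimensional k A]
    (B : A →ₗ[k] A →ₗ[k] k)
    (hBsymm : ∀ x y : A, B x y = B y x)
    (hBnd : ∀ x : A, (∀ y : A, B x y = 0) → x = 0)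
    (hBinv : ∀ x y z : A, B (x * y) z = B x (y * z))
    (r : A ⊗[k] A) (hskew : TensorProduct.comm k A A r = -r) :
    (e12 k A r * e13 k A r + e13 k A r * e23 k A r - e23 k A r * e12 k A r = 0) ↔
      (∀ x y : A,
        Fr r (B x) * Fr r (B y) =
          Fr r (B (Fr r (B x) * y)) + Fr r (B (x * Fr r (B y)))) := by
  have key : ∀ x y : A,
      Psi (B x) (B y) (e12 k A r * e13 k A r + e13 k A r * e23 k A r - e23 k A r * e12 k A r)
        = Fr r (B x) * Fr r (B y)
          - Fr r (B (Fr r (B x) * y)) - Fr r (B (x * Fr r (B y))) := by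
    intro x y
    rw [map_sub, map_add, psi_e12_e13 B hBinv, psi_e13_e23 B, psi_e23_e12 B hBsymm hBinv,
      hskew]
    simp only [Fr_neg, mul_neg, map_neg, Fr_dual_neg]
    abel
  constructor
  · intro h x y
    have h1 := key x y
    rw [h, map_zero] at h1
    have h2 : Fr r (B x) * Fr r (B y)
        - Fr r (B (Fr r (B x) * y)) - Fr r (B (x * Fr r (B y))) = 0 := h1.symm
    rw [sub_sub, sub_eq_zero] at h2
    exact h2
  · intro h
    apply psi_inj B hBnd
    intro x y
    rw [key x y, h x y]
    abel
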